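/- L'Hospital's rule for regulated functions (∞ case): Let f, g be regulated on (a,b), α strictly increasing, with D_α f and D_α g existing everywhere, D_α g of constant sign on (a,b), lim_{x↑b} (D_α f)(x)/(D_α g)(x) = A ∈ [-∞,∞], and lim_{x↑b} g^-(x) = +∞. Then lim_{x↑b} f^-(x)/g^-(x) = A. -/

import Mathlib

open Filter Topology Function Set MeasureTheory

/-- `x` lies in the interval `(a, b)` with extended-real endpoints. -/
def MemI (a b : EReal) (x : ℝ) : Prop := a < (x : EReal) ∧ (x : EReal) < b

/-- `f` is regulated on `(a, b)`: both one-sided limits exist (as real numbers)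
at every point of `(a, b)`. -/
def RegulatedOn' (f : ℝ → ℝ) (a b : EReal) : Prop :=
  ∀ x : ℝ, MemI a b x →
    (∃ L : ℝ, Tendsto f (𝓝[<] x) (𝓝 L)) ∧ ∃ R : ℝ, Tendsto f (𝓝[>] x) (𝓝 R)

/-- The symmetric `α`-derivative of `f` at `x` equals `A`:
`(D_α f)(x) = lim_{h↓0} (f⁻(x+h) - f⁺(x-h)) / (α⁻(x+h) - α⁺(x-h))`. -/
def HasDerivAlpha (f α : ℝ → ℝ) (x A : ℝ) : Prop :=
  Tendsto (fun h : ℝ =>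
      (leftLim f (x + h) - rightLim f (x - h)) /
        (leftLim α (x + h) - rightLim α (x - h)))
    (𝓝[>] (0 : ℝ)) (𝓝 A)

/-- The filter of real numbers approaching `b : EReal` from the left (`x ↑ b`). -/
noncomputable def leftFilter (b : EReal) : Filter ℝ := comap (fun x : ℝ => (x : EReal)) (𝓝[<] b)

/-- The filter of real numbers approaching `a : EReal` from the right (`x ↓ a`). -/
noncomputable def rightFilter (a : EReal) : Filter ℝ := comap (fun x : ℝ => (x : EReal)) (𝓝[>] a)

namespace LHopAux

variable {a b : EReal} {f g φ α : ℝ → ℝ}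

lemma exists_real_btwn (h : a < b) : ∃ c : ℝ, a < (c : EReal) ∧ (c : EReal) < b :=
  EReal.lt_iff_exists_real_btwn.1 h

lemma MemI.of_between {u v x : ℝ} (hu : MemI a b u) (hv : MemI a b v)
    (h1 : u ≤ x) (h2 : x ≤ v) : MemI a b x :=
  ⟨hu.1.trans_le (EReal.coe_le_coe_iff.2 h1),
    lt_of_le_of_lt (EReal.coe_le_coe_iff.2 h2) hv.2⟩

lemma ev_memI {x : ℝ} (hx : MemI a b x) :
    ∀ᶠ h in 𝓝[>] (0:ℝ), MemI a b (x + h) ∧ MemI a b (x - h) := by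
  obtain ⟨r, hxr, hrb⟩ := exists_real_btwn hx.2
  obtain ⟨l, hal, hlx⟩ := exists_real_btwn hx.1
  have hxr' : x < r := EReal.coe_lt_coe_iff.1 hxr
  have hlx' : l < x := EReal.coe_lt_coe_iff.1 hlx
  have hδ : (0:ℝ) < min (r - x) (x - l) := lt_min (by linarith) (by linarith)
  filter_upwards [Ioo_mem_nhdsGT_of_mem (⟨le_rfl, hδ⟩ : (0:ℝ) ∈ Ico 0 (min (r-x) (x-l)))]
    with h hh
  have h1 : h < r - x := lt_of_lt_of_le hh.2 (min_le_left _ _)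
  have h2 : h < x - l := lt_of_lt_of_le hh.2 (min_le_right _ _)
  have h0 : 0 < h := hh.1
  constructor
  · exact ⟨hx.1.trans (EReal.coe_lt_coe_iff.2 (by linarith)),
      (EReal.coe_lt_coe_iff.2 (by linarith : x + h < r)).trans hrb⟩
  · exact ⟨hal.trans (EReal.coe_lt_coe_iff.2 (by linarith : l < x - h)),
      (EReal.coe_lt_coe_iff.2 (by linarith : x - h < x)).trans hx.2⟩

lemma tendsto_left (hf : RegulatedOn' f a b) {x : ℝ} (hx : MemI a b x) :
    Tendsto f (𝓝[<] x) (𝓝 (leftLim f x)) := by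
  obtain ⟨L, hL⟩ := (hf x hx).1
  rwa [leftLim_eq_of_tendsto hL]

lemma tendsto_right (hf : RegulatedOn' f a b) {x : ℝ} (hx : MemI a b x) :
    Tendsto f (𝓝[>] x) (𝓝 (rightLim f x)) := by
  obtain ⟨R, hR⟩ := (hf x hx).2
  rwa [rightLim_eq_of_tendsto hR]

lemma tendsto_leftLim_left (hf : RegulatedOn' f a b) {x : ℝ} (hx : MemI a b x) :
    Tendsto (leftLim f) (𝓝[<] x) (𝓝 (leftLim f x)) ∧
    Tendsto (rightLim f) (𝓝[<] x) (𝓝 (leftLim f x)) := by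
  set L := leftLim f x with hL
  have key : ∀ ε : ℝ, 0 < ε → ∀ᶠ y in 𝓝[<] x,
      |leftLim f y - L| ≤ ε ∧ |rightLim f y - L| ≤ ε := by
    intro ε hε
    have h1 : ∀ᶠ z in 𝓝[<] x, f z ∈ Icc (L - ε) (L + ε) :=
      tendsto_left hf hx (Icc_mem_nhds (by linarith) (by linarith))
    obtain ⟨w, hw, hsub⟩ := mem_nhdsLT_iff_exists_Ioo_subset.1 h1
    obtain ⟨l, hal, hlx⟩ := exists_real_btwn hx.1
    have hlx' : l < x := EReal.coe_lt_coe_iff.1 hlx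
    have hw'x : max w l < x := max_lt hw hlx'
    filter_upwards [Ioo_mem_nhdsLT hw'x] with y hy
    have hym : MemI a b y :=
      ⟨hal.trans (EReal.coe_lt_coe_iff.2 (lt_of_le_of_lt (le_max_right w l) hy.1)),
       (EReal.coe_lt_coe_iff.2 hy.2).trans hx.2⟩
    have habs : ∀ z, z ∈ Ioo (max w l) x → |f z - L| ≤ ε := by
      intro z hz
      have := hsub ⟨lt_of_le_of_lt (le_max_left w l) hz.1, hz.2⟩
      rw [abs_le]; exact ⟨by linarith [this.1], by linarith [this.2]⟩
    constructor
    · refine le_of_tendsto ((tendsto_left hf hym).sub_const L).abs ?_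
      filter_upwards [Ioo_mem_nhdsLT (show max w l < y from hy.1)] with z hz
      exact habs z ⟨hz.1, hz.2.trans hy.2⟩
    · refine le_of_tendsto ((tendsto_right hf hym).sub_const L).abs ?_
      filter_upwards [Ioo_mem_nhdsGT (show y < x from hy.2)] with z hz
      exact habs z ⟨lt_trans hy.1 hz.1, hz.2⟩
  constructor <;>
  · rw [Metric.tendsto_nhds]
    intro ε hε
    filter_upwards [key (ε/2) (by positivity)] with y hy
    rw [Real.dist_eq]
    first
      | (calc |leftLim f y - L| ≤ ε/2 := hy.1
              _ < ε := by linarith)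
      | (calc |rightLim f y - L| ≤ ε/2 := hy.2
              _ < ε := by linarith)

lemma tendsto_leftLim_right (hf : RegulatedOn' f a b) {x : ℝ} (hx : MemI a b x) :
    Tendsto (leftLim f) (𝓝[>] x) (𝓝 (rightLim f x)) ∧
    Tendsto (rightLim f) (𝓝[>] x) (𝓝 (rightLim f x)) := by
  set L := rightLim f x with hL
  have key : ∀ ε : ℝ, 0 < ε → ∀ᶠ y in 𝓝[>] x,
      |leftLim f y - L| ≤ ε ∧ |rightLim f y - L| ≤ ε := by
    intro ε hε
    have h1 : ∀ᶠ z in 𝓝[>] x, f z ∈ Icc (L - ε) (L + ε) :=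
      tendsto_right hf hx (Icc_mem_nhds (by linarith) (by linarith))
    obtain ⟨w, hw, hsub⟩ := mem_nhdsGT_iff_exists_Ioo_subset.1 h1
    obtain ⟨r, hxr, hrb⟩ := exists_real_btwn hx.2
    have hxr' : x < r := EReal.coe_lt_coe_iff.1 hxr
    have hw'x : x < min w r := lt_min hw hxr'
    filter_upwards [Ioo_mem_nhdsGT hw'x] with y hy
    have hym : MemI a b y :=
      ⟨hx.1.trans (EReal.coe_lt_coe_iff.2 hy.1),
       (EReal.coe_lt_coe_iff.2 (lt_of_lt_of_le hy.2 (min_le_right w r))).trans hrb⟩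
    have habs : ∀ z, z ∈ Ioo x (min w r) → |f z - L| ≤ ε := by
      intro z hz
      have := hsub ⟨hz.1, lt_of_lt_of_le hz.2 (min_le_left w r)⟩
      rw [abs_le]; exact ⟨by linarith [this.1], by linarith [this.2]⟩
    constructor
    · refine le_of_tendsto ((tendsto_left hf hym).sub_const L).abs ?_
      filter_upwards [Ioo_mem_nhdsLT (show x < y from hy.1)] with z hz
      exact habs z ⟨hz.1, hz.2.trans hy.2⟩
    · refine le_of_tendsto ((tendsto_right hf hym).sub_const L).abs ?_
      filter_upwards [Ioo_mem_nhdsGT (show y < min w r from hy.2)] with z hz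
      exact habs z ⟨lt_trans hy.1 hz.1, hz.2⟩
  constructor <;>
  · rw [Metric.tendsto_nhds]
    intro ε hε
    filter_upwards [key (ε/2) (by positivity)] with y hy
    rw [Real.dist_eq]
    first
      | (calc |leftLim f y - L| ≤ ε/2 := hy.1
              _ < ε := by linarith)
      | (calc |rightLim f y - L| ≤ ε/2 := hy.2
              _ < ε := by linarith)

lemma tendsto_sub_nhdsWithin (x : ℝ) :
    Tendsto (fun h : ℝ => x - h) (𝓝[>] (0:ℝ)) (𝓝[<] x) := by
  apply tendsto_nhdsWithin_of_tendsto_nhds_of_eventually_within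
  · have : Tendsto (fun h : ℝ => x - h) (𝓝 (0:ℝ)) (𝓝 (x - 0)) :=
      tendsto_const_nhds.sub tendsto_id
    simpa using this.mono_left nhdsWithin_le_nhds
  · filter_upwards [self_mem_nhdsWithin] with h hh
    exact sub_lt_self x hh

lemma tendsto_add_nhdsWithin (x : ℝ) :
    Tendsto (fun h : ℝ => x + h) (𝓝[>] (0:ℝ)) (𝓝[>] x) := by
  apply tendsto_nhdsWithin_of_tendsto_nhds_of_eventually_within
  · have : Tendsto (fun h : ℝ => x + h) (𝓝 (0:ℝ)) (𝓝 (x + 0)) :=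
      tendsto_const_nhds.add tendsto_id
    simpa using this.mono_left nhdsWithin_le_nhds
  · filter_upwards [self_mem_nhdsWithin] with h hh
    exact lt_add_of_pos_right x hh

lemma jump (hφ : RegulatedOn' φ a b) {x : ℝ} (hx : MemI a b x)
    (H : ∀ᶠ h in 𝓝[>] (0:ℝ), rightLim φ (x - h) < leftLim φ (x + h)) :
    leftLim φ x ≤ rightLim φ x := by
  have t1 : Tendsto (fun h : ℝ => rightLim φ (x - h)) (𝓝[>] (0:ℝ)) (𝓝 (leftLim φ x)) :=
    (tendsto_leftLim_left hφ hx).2.comp (tendsto_sub_nhdsWithin x)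
  have t2 : Tendsto (fun h : ℝ => leftLim φ (x + h)) (𝓝[>] (0:ℝ)) (𝓝 (rightLim φ x)) :=
    (tendsto_leftLim_right hφ hx).1.comp (tendsto_add_nhdsWithin x)
  exact le_of_tendsto_of_tendsto t1 t2 (H.mono fun h hh => hh.le)



lemma mono_aux (hφ : RegulatedOn' φ a b)
    (H : ∀ x : ℝ, MemI a b x → ∀ᶠ h in 𝓝[>] (0:ℝ), rightLim φ (x - h) < leftLim φ (x + h))
    {u v : ℝ} (hu : MemI a b u) (hv : MemI a b v) (huv : u < v) :
    leftLim φ u ≤ leftLim φ v := by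
  have hmem : ∀ {s : ℝ}, u ≤ s → s ≤ v → MemI a b s := fun {s} h1 h2 =>
    MemI.of_between hu hv h1 h2
  have main : ∀ ε : ℝ, 0 < ε → leftLim φ u - ε ≤ leftLim φ v := by
    intro ε hε
    set S : Set ℝ :=
      {t | t ∈ Icc u v ∧ ∀ s, u < s → s ≤ t → leftLim φ u - ε ≤ leftLim φ s} with hSdef
    have huS : u ∈ S :=
      ⟨⟨le_rfl, huv.le⟩, fun s hs1 hs2 => absurd (hs1.trans_le hs2) (lt_irrefl u)⟩
    have hSne : S.Nonempty := ⟨u, huS⟩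
    have hbdd : BddAbove S := ⟨v, fun t ht => ht.1.2⟩
    set c := sSup S with hcdef
    have hcu : u ≤ c := le_csSup hbdd huS
    have hcv : c ≤ v := csSup_le hSne fun t ht => ht.1.2
    have hcm : MemI a b c := hmem hcu hcv
    have key : ∀ s, u < s → s < c → leftLim φ u - ε ≤ leftLim φ s := by
      intro s hs1 hs2
      obtain ⟨t, htS, hst⟩ := exists_lt_of_lt_csSup hSne hs2
      exact htS.2 s hs1 hst.le
    have keyc : u < c → leftLim φ u - ε ≤ leftLim φ c := by
      intro huc
      refine ge_of_tendsto (tendsto_leftLim_left hφ hcm).1 ?_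
      filter_upwards [Ioo_mem_nhdsLT huc] with s hs
      exact key s hs.1 hs.2
    have hcveq : c = v := by
      by_contra hne
      have hclt : c < v := lt_of_le_of_ne hcv hne
      rcases eq_or_lt_of_le hcu with hcueq | hcu'
      · -- c = u
        have t2 : Tendsto (fun h : ℝ => rightLim φ (u - h)) (𝓝[>] (0:ℝ))
            (𝓝 (leftLim φ u)) :=
          (tendsto_leftLim_left hφ hu).2.comp (tendsto_sub_nhdsWithin u)
        have hev1 : ∀ᶠ h in 𝓝[>] (0:ℝ), leftLim φ u - ε < rightLim φ (u - h) :=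
          t2 (Ioi_mem_nhds (by linarith))
        have hcu0 : u = c := hcueq
        have huv' : (0:ℝ) < v - u := by linarith
        have hev : ∀ᶠ h in 𝓝[>] (0:ℝ),
            (leftLim φ u - ε ≤ leftLim φ (u + h)) ∧ u + h ≤ v := by
          filter_upwards [hev1, H u hu,
            Ioo_mem_nhdsGT_of_mem (⟨le_rfl, huv'⟩ : (0:ℝ) ∈ Ico 0 (v - u))] with h h1 h2 h3
          exact ⟨(h1.trans h2).le, by linarith [h3.2]⟩
        obtain ⟨δ, hδpos, hδ⟩ := mem_nhdsGT_iff_exists_Ioc_subset.1 hev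
        have hδ0 : (0:ℝ) < δ := hδpos
        have htS : u + δ ∈ S := by
          refine ⟨⟨by linarith, (hδ ⟨hδ0, le_rfl⟩).2⟩, ?_⟩
          intro s hs1 hs2
          have hh : s - u ∈ Ioc (0:ℝ) δ := ⟨by linarith, by linarith⟩
          have := (hδ hh).1
          simpa using this
        have hle : u + δ ≤ c := le_csSup hbdd htS
        rw [← hcu0] at hle
        linarith
      · -- u < c
        have hδ2 : (0:ℝ) < min (c - u) (v - c) := lt_min (by linarith) (by linarith)
        have hev : ∀ᶠ h in 𝓝[>] (0:ℝ),
            (leftLim φ u - ε ≤ leftLim φ (c + h)) ∧ c + h ≤ v := by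
          filter_upwards [H c hcm,
            Ioo_mem_nhdsGT_of_mem (⟨le_rfl, hδ2⟩ : (0:ℝ) ∈ Ico 0 (min (c-u) (v-c)))]
            with h h1 h2
          have hh1 : h < c - u := lt_of_lt_of_le h2.2 (min_le_left _ _)
          have hh2 : h < v - c := lt_of_lt_of_le h2.2 (min_le_right _ _)
          have h0 : 0 < h := h2.1
          have hmem1 : MemI a b (c - h) := hmem (by linarith) (by linarith)
          have hb1 : leftLim φ u - ε ≤ leftLim φ (c - h) := key _ (by linarith) (by linarith)
          have hb2 : leftLim φ (c - h) ≤ rightLim φ (c - h) := jump hφ hmem1 (H _ hmem1)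
          exact ⟨by linarith, by linarith⟩
        obtain ⟨δ, hδpos, hδ⟩ := mem_nhdsGT_iff_exists_Ioc_subset.1 hev
        have hδ0 : (0:ℝ) < δ := hδpos
        have htS : c + δ ∈ S := by
          refine ⟨⟨by linarith, (hδ ⟨hδ0, le_rfl⟩).2⟩, ?_⟩
          intro s hs1 hs2
          rcases lt_or_ge s c with hsc | hsc
          · exact key s hs1 hsc
          · rcases eq_or_lt_of_le hsc with hsc' | hsc'
            · rw [← hsc']; exact keyc hcu'
            · have hh : s - c ∈ Ioc (0:ℝ) δ := ⟨by linarith, by linarith⟩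
              have := (hδ hh).1
              simpa using this
        have hle : c + δ ≤ c := le_csSup hbdd htS
        linarith
      -- end cases
    have := keyc (by rw [hcveq]; exact huv)
    rw [hcveq] at this
    exact this
  by_contra hlt
  push_neg at hlt
  have := main ((leftLim φ u - leftLim φ v) / 2) (by linarith)
  linarith

lemma mono_strict (hφ : RegulatedOn' φ a b)
    (H : ∀ x : ℝ, MemI a b x → ∀ᶠ h in 𝓝[>] (0:ℝ), rightLim φ (x - h) < leftLim φ (x + h))
    {u v : ℝ} (hu : MemI a b u) (hv : MemI a b v) (huv : u < v) :
    leftLim φ u < leftLim φ v := by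
  set m := (u + v) / 2 with hm
  have hmm : MemI a b m := MemI.of_between hu hv (by simp [hm]; linarith) (by simp [hm]; linarith)
  have hδ2 : (0:ℝ) < (v - u) / 2 := by linarith
  obtain ⟨h, hh1, hh2⟩ := ((H m hmm).and
    (Ioo_mem_nhdsGT_of_mem (⟨le_rfl, hδ2⟩ : (0:ℝ) ∈ Ico 0 ((v-u)/2)) :
      ∀ᶠ h in 𝓝[>] (0:ℝ), h ∈ Ioo 0 ((v-u)/2))).exists
  have h0 : 0 < h := hh2.1
  have hlt : h < (v - u) / 2 := hh2.2
  have hm1 : MemI a b (m - h) := MemI.of_between hu hv (by simp [hm]; linarith) (by simp [hm]; linarith)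
  have hm2 : MemI a b (m + h) := MemI.of_between hu hv (by simp [hm]; linarith) (by simp [hm]; linarith)
  have hA : leftLim φ u ≤ leftLim φ (m - h) := by
    rcases eq_or_lt_of_le (show u ≤ m - h by simp [hm]; linarith) with he | hl
    · rw [← he]
    · exact mono_aux hφ H hu hm1 hl
  have hB : leftLim φ (m - h) ≤ rightLim φ (m - h) := jump hφ hm1 (H _ hm1)
  have hC : rightLim φ (m - h) < leftLim φ (m + h) := hh1
  have hD : leftLim φ (m + h) ≤ leftLim φ v := by
    rcases eq_or_lt_of_le (show m + h ≤ v by simp [hm]; linarith) with he | hl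
    · rw [he]
    · exact mono_aux hφ H hm2 hv hl
  linarith


lemma alpha_lb (hα : StrictMonoOn α {x : ℝ | MemI a b x}) {m y : ℝ}
    (hm : MemI a b m) (hy : MemI a b y) (hmy : m < y) : α m ≤ leftLim α y := by
  have hmid : MemI a b ((m + y) / 2) := MemI.of_between hm hy (by linarith) (by linarith)
  set s : Set ℝ := α '' Ioo m y with hs
  have hsne : s.Nonempty := ⟨α ((m + y) / 2), ⟨(m + y) / 2, ⟨by linarith, by linarith⟩, rfl⟩⟩
  have hmono : ∀ {z w : ℝ}, MemI a b z → MemI a b w → z ≤ w → α z ≤ α w := by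
    intro z w hz hw hzw
    rcases eq_or_lt_of_le hzw with he | hl
    · rw [he]
    · exact (hα hz hw hl).le
  have hbdd : BddAbove s := by
    refine ⟨α y, ?_⟩
    rintro _ ⟨z, hz, rfl⟩
    exact hmono (MemI.of_between hm hy hz.1.le hz.2.le) hy hz.2.le
  set T := sSup s with hT
  have htend : Tendsto α (𝓝[<] y) (𝓝 T) := by
    rw [Metric.tendsto_nhds]
    intro ε hε
    obtain ⟨_, ⟨w₀, hw₀, rfl⟩, hw₀2⟩ := exists_lt_of_lt_csSup hsne (show T - ε < T by linarith)
    filter_upwards [Ioo_mem_nhdsLT hw₀.2] with z hz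
    have hzm : MemI a b z := MemI.of_between hm hy (by linarith [hw₀.1, hz.1]) hz.2.le
    have h1 : α w₀ ≤ α z := hmono (MemI.of_between hm hy hw₀.1.le hw₀.2.le) hzm hz.1.le
    have h2 : α z ≤ T := le_csSup hbdd ⟨z, ⟨lt_trans hw₀.1 hz.1, hz.2⟩, rfl⟩
    rw [Real.dist_eq, abs_lt]
    constructor <;> linarith
  have hll : leftLim α y = T := leftLim_eq_of_tendsto htend
  rw [hll]
  calc α m ≤ α ((m + y) / 2) := hmono hm hmid (by linarith)
    _ ≤ T := le_csSup hbdd ⟨(m + y) / 2, ⟨by linarith, by linarith⟩, rfl⟩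

lemma alpha_ub (hα : StrictMonoOn α {x : ℝ | MemI a b x}) {y q : ℝ}
    (hy : MemI a b y) (hq : MemI a b q) (hyq : y < q) : rightLim α y ≤ α q := by
  have hmid : MemI a b ((y + q) / 2) := MemI.of_between hy hq (by linarith) (by linarith)
  set s : Set ℝ := α '' Ioo y q with hs
  have hsne : s.Nonempty := ⟨α ((y + q) / 2), ⟨(y + q) / 2, ⟨by linarith, by linarith⟩, rfl⟩⟩
  have hmono : ∀ {z w : ℝ}, MemI a b z → MemI a b w → z ≤ w → α z ≤ α w := by
    intro z w hz hw hzw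
    rcases eq_or_lt_of_le hzw with he | hl
    · rw [he]
    · exact (hα hz hw hl).le
  have hbdd : BddBelow s := by
    refine ⟨α y, ?_⟩
    rintro _ ⟨z, hz, rfl⟩
    exact hmono hy (MemI.of_between hy hq hz.1.le hz.2.le) hz.1.le
  set T := sInf s with hT
  have htend : Tendsto α (𝓝[>] y) (𝓝 T) := by
    rw [Metric.tendsto_nhds]
    intro ε hε
    obtain ⟨_, ⟨w₀, hw₀, rfl⟩, hw₀2⟩ := exists_lt_of_csInf_lt hsne (show T < T + ε by linarith)
    filter_upwards [Ioo_mem_nhdsGT hw₀.1] with z hz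
    have hzm : MemI a b z := MemI.of_between hy hq hz.1.le (by linarith [hw₀.2, hz.2])
    have h1 : α z ≤ α w₀ := hmono hzm (MemI.of_between hy hq hw₀.1.le hw₀.2.le) hz.2.le
    have h2 : T ≤ α z := csInf_le hbdd ⟨z, ⟨hz.1, lt_trans hz.2 hw₀.2⟩, rfl⟩
    rw [Real.dist_eq, abs_lt]
    constructor <;> linarith
  have hll : rightLim α y = T := rightLim_eq_of_tendsto htend
  rw [hll]
  calc T ≤ α ((y + q) / 2) := csInf_le hbdd ⟨(y + q) / 2, ⟨by linarith, by linarith⟩, rfl⟩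
    _ ≤ α q := hmono hmid hq (by linarith)

lemma denom_pos (hα : StrictMonoOn α {x : ℝ | MemI a b x}) {x : ℝ} (hx : MemI a b x) :
    ∀ᶠ h in 𝓝[>] (0:ℝ),
      (0 < leftLim α (x + h) - rightLim α (x - h)) ∧ MemI a b (x + h) ∧ MemI a b (x - h) := by
  filter_upwards [ev_memI hx, self_mem_nhdsWithin] with h hmem hh
  have h0 : (0:ℝ) < h := hh
  refine ⟨?_, hmem.1, hmem.2⟩
  have hmid : MemI a b (x - h / 2) := MemI.of_between hmem.2 hx (by linarith) (by linarith)
  have h1 : α x ≤ leftLim α (x + h) := alpha_lb hα hx hmem.1 (by linarith)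
  have h2 : rightLim α (x - h) ≤ α (x - h / 2) := alpha_ub hα hmem.2 hmid (by linarith)
  have h3 : α (x - h / 2) < α x := hα hmid hx (by linarith)
  linarith

lemma lincomb {Df Dg : ℝ → ℝ}
    (hf : RegulatedOn' f a b) (hg : RegulatedOn' g a b)
    (hα : StrictMonoOn α {x : ℝ | MemI a b x})
    (hDf : ∀ x : ℝ, MemI a b x → HasDerivAlpha f α x (Df x))
    (hDg : ∀ x : ℝ, MemI a b x → HasDerivAlpha g α x (Dg x))
    (c₁ c₂ : ℝ) (hpos : ∀ x, MemI a b x → 0 < c₁ * Df x + c₂ * Dg x)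
    {u v : ℝ} (hu : MemI a b u) (hv : MemI a b v) (huv : u < v) :
    c₁ * leftLim f u + c₂ * leftLim g u < c₁ * leftLim f v + c₂ * leftLim g v := by
  set φ : ℝ → ℝ := fun t => c₁ * f t + c₂ * g t with hφdef
  have hφreg : RegulatedOn' φ a b := by
    intro x hx
    obtain ⟨⟨Lf, hLf⟩, ⟨Rf, hRf⟩⟩ := hf x hx
    obtain ⟨⟨Lg, hLg⟩, ⟨Rg, hRg⟩⟩ := hg x hx
    exact ⟨⟨c₁ * Lf + c₂ * Lg, (hLf.const_mul c₁).add (hLg.const_mul c₂)⟩,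
      ⟨c₁ * Rf + c₂ * Rg, (hRf.const_mul c₁).add (hRg.const_mul c₂)⟩⟩
  have hcombL : ∀ y, MemI a b y →
      leftLim φ y = c₁ * leftLim f y + c₂ * leftLim g y := fun y hy =>
    leftLim_eq_of_tendsto
      (((tendsto_left hf hy).const_mul c₁).add ((tendsto_left hg hy).const_mul c₂))
  have hcombR : ∀ y, MemI a b y →
      rightLim φ y = c₁ * rightLim f y + c₂ * rightLim g y := fun y hy =>
    rightLim_eq_of_tendsto
      (((tendsto_right hf hy).const_mul c₁).add ((tendsto_right hg hy).const_mul c₂))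
  have H : ∀ x, MemI a b x →
      ∀ᶠ h in 𝓝[>] (0:ℝ), rightLim φ (x - h) < leftLim φ (x + h) := by
    intro x hx
    have hq : Tendsto (fun h : ℝ =>
        c₁ * ((leftLim f (x + h) - rightLim f (x - h)) /
              (leftLim α (x + h) - rightLim α (x - h))) +
        c₂ * ((leftLim g (x + h) - rightLim g (x - h)) /
              (leftLim α (x + h) - rightLim α (x - h))))
        (𝓝[>] (0:ℝ)) (𝓝 (c₁ * Df x + c₂ * Dg x)) :=
      ((hDf x hx).const_mul c₁).add ((hDg x hx).const_mul c₂)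
    filter_upwards [hq (Ioi_mem_nhds (hpos x hx)), denom_pos hα hx] with h h1 h2
    obtain ⟨hd, hm1, hm2⟩ := h2
    rw [hcombL _ hm1, hcombR _ hm2]
    have hq0 : (0:ℝ) < c₁ * ((leftLim f (x + h) - rightLim f (x - h)) /
              (leftLim α (x + h) - rightLim α (x - h))) +
        c₂ * ((leftLim g (x + h) - rightLim g (x - h)) /
              (leftLim α (x + h) - rightLim α (x - h))) := h1
    have hd0 : leftLim α (x + h) - rightLim α (x - h) ≠ 0 := ne_of_gt hd
    have hmul := mul_pos hq0 hd
    have hexp : (c₁ * ((leftLim f (x + h) - rightLim f (x - h)) /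
              (leftLim α (x + h) - rightLim α (x - h))) +
        c₂ * ((leftLim g (x + h) - rightLim g (x - h)) /
              (leftLim α (x + h) - rightLim α (x - h)))) *
          (leftLim α (x + h) - rightLim α (x - h)) =
        c₁ * (leftLim f (x + h) - rightLim f (x - h)) +
        c₂ * (leftLim g (x + h) - rightLim g (x - h)) := by
      field_simp
    rw [hexp] at hmul
    linarith
  have := mono_strict hφreg H hu hv huv
  rwa [hcombL u hu, hcombL v hv] at this


lemma leftFilter_neBot (hab : a < b) : (leftFilter b).NeBot := by
  apply comap_neBot
  intro t ht
  obtain ⟨l, hl, hsub⟩ := (mem_nhdsLT_iff_exists_Ioo_subset' hab).1 ht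
  obtain ⟨x, hx1, hx2⟩ := EReal.lt_iff_exists_real_btwn.1 (hl : l < b)
  exact ⟨x, hsub ⟨hx1, hx2⟩⟩

lemma eventually_gt_leftFilter {u₀ : ℝ} (hu : MemI a b u₀) :
    ∀ᶠ x in leftFilter b, u₀ < x ∧ MemI a b x := by
  have hIoo : Ioo (u₀ : EReal) b ∈ 𝓝[<] b := Ioo_mem_nhdsLT hu.2
  have : (fun x : ℝ => (x : EReal)) ⁻¹' Ioo (u₀ : EReal) b ∈ leftFilter b :=
    preimage_mem_comap hIoo
  filter_upwards [this] with x hx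
  exact ⟨EReal.coe_lt_coe_iff.1 hx.1, ⟨hu.1.trans hx.1, hx.2⟩⟩

lemma eventually_extract (hab : a < b) {p : ℝ → Prop}
    (h : ∀ᶠ x in leftFilter b, p x) :
    ∃ c : ℝ, MemI a b c ∧ ∀ x : ℝ, c < x → (x : EReal) < b → p x := by
  obtain ⟨t, ht, hsub⟩ := mem_comap.1 h
  obtain ⟨l, hl, hIoo⟩ := (mem_nhdsLT_iff_exists_Ioo_subset' hab).1 ht
  have hmax : max l a < b := max_lt hl hab
  obtain ⟨c, hc1, hc2⟩ := EReal.lt_iff_exists_real_btwn.1 hmax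
  refine ⟨c, ⟨lt_of_le_of_lt (le_max_right l a) hc1, hc2⟩, ?_⟩
  intro x hcx hxb
  exact hsub (hIoo ⟨lt_of_le_of_lt (le_max_left l a)
    (hc1.trans (EReal.coe_lt_coe_iff.2 hcx)), hxb⟩)

lemma bound_up {L : Filter ℝ} {F G : ℝ → ℝ} {P : ℝ → Prop}
    (hG : Tendsto G L atTop) (u₀ M ε : ℝ) (hε : 0 < ε)
    (hmem : ∀ᶠ x in L, P x)
    (hup : ∀ x, P x → F x - F u₀ ≤ M * (G x - G u₀)) :
    ∀ᶠ x in L, F x / G x ≤ M + ε := by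
  have hinv : Tendsto (fun x => G u₀ / G x) L (𝓝 0) := tendsto_const_nhds.div_atTop hG
  have hinv2 : Tendsto (fun x => F u₀ / G x) L (𝓝 0) := tendsto_const_nhds.div_atTop hG
  have h1 : Tendsto (fun x => M * (1 - G u₀ / G x) + F u₀ / G x) L (𝓝 M) := by
    have hbase : Tendsto (fun x => (1:ℝ) - G u₀ / G x) L (𝓝 (1 - 0)) :=
      tendsto_const_nhds.sub hinv
    have := (hbase.const_mul M).add hinv2
    simpa using this
  filter_upwards [h1 (Iio_mem_nhds (show M < M + ε by linarith)),
    hG.eventually (eventually_gt_atTop 0), hmem] with x hx1 hx2 hx3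
  have hb := hup x hx3
  have heq : (M * (1 - G u₀ / G x) + F u₀ / G x) * G x = M * (G x - G u₀) + F u₀ := by
    field_simp
  have : F x / G x ≤ M * (1 - G u₀ / G x) + F u₀ / G x := by
    rw [div_le_iff₀ hx2, heq]
    linarith
  have hx1' : M * (1 - G u₀ / G x) + F u₀ / G x < M + ε := hx1
  linarith

lemma bound_low {L : Filter ℝ} {F G : ℝ → ℝ} {P : ℝ → Prop}
    (hG : Tendsto G L atTop) (u₀ m ε : ℝ) (hε : 0 < ε)
    (hmem : ∀ᶠ x in L, P x)
    (hlow : ∀ x, P x → m * (G x - G u₀) ≤ F x - F u₀) :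
    ∀ᶠ x in L, m - ε ≤ F x / G x := by
  have hinv : Tendsto (fun x => G u₀ / G x) L (𝓝 0) := tendsto_const_nhds.div_atTop hG
  have hinv2 : Tendsto (fun x => F u₀ / G x) L (𝓝 0) := tendsto_const_nhds.div_atTop hG
  have h1 : Tendsto (fun x => m * (1 - G u₀ / G x) + F u₀ / G x) L (𝓝 m) := by
    have hbase : Tendsto (fun x => (1:ℝ) - G u₀ / G x) L (𝓝 (1 - 0)) :=
      tendsto_const_nhds.sub hinv
    have := (hbase.const_mul m).add hinv2
    simpa using this
  filter_upwards [h1 (Ioi_mem_nhds (show m - ε < m by linarith)),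
    hG.eventually (eventually_gt_atTop 0), hmem] with x hx1 hx2 hx3
  have hb := hlow x hx3
  have heq : (m * (1 - G u₀ / G x) + F u₀ / G x) * G x = m * (G x - G u₀) + F u₀ := by
    field_simp
  have : m * (1 - G u₀ / G x) + F u₀ / G x ≤ F x / G x := by
    rw [le_div_iff₀ hx2, heq]
    linarith
  have hx1' : m - ε < m * (1 - G u₀ / G x) + F u₀ / G x := hx1
  linarith

end LHopAux

open LHopAux in
/-- L'Hospital's rule for regulated functions, `∞` case. -/
theorem stmt16 (a b : EReal) (hab : a < b) (f g α : ℝ → ℝ) (Df Dg : ℝ → ℝ) (A : EReal)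
    (hf : RegulatedOn' f a b) (hg : RegulatedOn' g a b)
    (hα : StrictMonoOn α {x : ℝ | MemI a b x})
    (hDf : ∀ x : ℝ, MemI a b x → HasDerivAlpha f α x (Df x))
    (hDg : ∀ x : ℝ, MemI a b x → HasDerivAlpha g α x (Dg x))
    (hsign : (∀ x : ℝ, MemI a b x → 0 < Dg x) ∨ (∀ x : ℝ, MemI a b x → Dg x < 0))
    (hratio : Tendsto (fun x : ℝ => ((Df x / Dg x : ℝ) : EReal)) (leftFilter b) (𝓝 A))
    (hginf : Tendsto (leftLim g) (leftFilter b) atTop) :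
    Tendsto (fun x : ℝ => ((leftLim f x / leftLim g x : ℝ) : EReal))
      (leftFilter b) (𝓝 A) := by
  haveI : (leftFilter b).NeBot := leftFilter_neBot hab
  set F : ℝ → ℝ := leftLim f with hF
  set G : ℝ → ℝ := leftLim g with hG
  -- dispose of the negative-sign case
  have hpos : ∀ x : ℝ, MemI a b x → 0 < Dg x := by
    rcases hsign with h | hneg
    · exact h
    · exfalso
      obtain ⟨c₀, hc₀1, hc₀2⟩ := exists_real_btwn hab
      have hc₀ : MemI a b c₀ := ⟨hc₀1, hc₀2⟩
      have hanti : ∀ {u v : ℝ}, MemI a b u → MemI a b v → u < v → G v < G u := by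
        intro u v hu hv huv
        have := lincomb hf hg hα hDf hDg 0 (-1)
          (fun x hx => by have := hneg x hx; linarith) hu hv huv
        simp only [zero_mul, zero_add, neg_one_mul] at this
        linarith
      have hev := (eventually_gt_leftFilter hc₀).and
        (hginf.eventually (eventually_gt_atTop (G c₀)))
      obtain ⟨x, ⟨hx1, hx2⟩, hx3⟩ := hev.exists
      exact absurd hx3 (not_lt.2 (hanti hc₀ hx2 hx1).le)
  -- helper producing upper MVT bounds from eventual derivative-ratio bounds
  have lincomb_from : ∀ (c : ℝ), MemI a b c → ∀ (c₁ c₂ : ℝ),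
      (∀ x : ℝ, c < x → (x : EReal) < b → 0 < c₁ * Df x + c₂ * Dg x) →
      ∀ u v : ℝ, c < u → u < v → (v : EReal) < b →
        c₁ * F u + c₂ * G u < c₁ * F v + c₂ * G v := by
    intro c hc c₁ c₂ hposc u v hcu huv hvb
    have hsub : ∀ x : ℝ, MemI (c : EReal) b x → MemI a b x := fun x hx =>
      ⟨hc.1.trans hx.1, hx.2⟩
    have hum : MemI (c : EReal) b u :=
      ⟨EReal.coe_lt_coe_iff.2 hcu, lt_of_le_of_lt (EReal.coe_le_coe_iff.2 huv.le) hvb⟩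
    have hvm : MemI (c : EReal) b v :=
      ⟨EReal.coe_lt_coe_iff.2 (hcu.trans huv), hvb⟩
    exact lincomb (a := (c : EReal)) (b := b)
      (fun x hx => hf x (hsub x hx)) (fun x hx => hg x (hsub x hx))
      (hα.mono (fun x hx => hsub x hx))
      (fun x hx => hDf x (hsub x hx)) (fun x hx => hDg x (hsub x hx))
      c₁ c₂ (fun x hx => hposc x (EReal.coe_lt_coe_iff.1 hx.1) hx.2)
      hum hvm huv
  have key_up : ∀ (c : ℝ), MemI a b c → ∀ (M : ℝ),
      (∀ x : ℝ, c < x → (x : EReal) < b → Df x < M * Dg x) →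
      ∃ u₀ : ℝ, MemI a b u₀ ∧ ∀ x, MemI a b x → u₀ < x →
        F x - F u₀ ≤ M * (G x - G u₀) := by
    intro c hc M hM
    obtain ⟨u₀, h1, h2⟩ := EReal.lt_iff_exists_real_btwn.1 hc.2
    have hcu₀ : c < u₀ := EReal.coe_lt_coe_iff.1 h1
    refine ⟨u₀, ⟨hc.1.trans h1, h2⟩, ?_⟩
    intro x hx hux
    have := lincomb_from c hc (-1) M
      (fun y hy1 hy2 => by have := hM y hy1 hy2; linarith)
      u₀ x hcu₀ hux hx.2
    linarith
  have key_low : ∀ (c : ℝ), MemI a b c → ∀ (m : ℝ),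
      (∀ x : ℝ, c < x → (x : EReal) < b → m * Dg x < Df x) →
      ∃ u₀ : ℝ, MemI a b u₀ ∧ ∀ x, MemI a b x → u₀ < x →
        m * (G x - G u₀) ≤ F x - F u₀ := by
    intro c hc m hm
    obtain ⟨u₀, h1, h2⟩ := EReal.lt_iff_exists_real_btwn.1 hc.2
    have hcu₀ : c < u₀ := EReal.coe_lt_coe_iff.1 h1
    refine ⟨u₀, ⟨hc.1.trans h1, h2⟩, ?_⟩
    intro x hx hux
    have := lincomb_from c hc 1 (-m)
      (fun y hy1 hy2 => by have := hm y hy1 hy2; linarith)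
      u₀ x hcu₀ hux hx.2
    linarith
  induction A with
  | bot =>
    rw [EReal.tendsto_nhds_bot_iff_real]
    intro N
    set K : ℝ := max (-N) 0 + 1 with hK
    have hK1 : 1 ≤ K := by
      have := le_max_right (-N) (0:ℝ); simp only [hK]; linarith
    have hKN : -2 * K + 1 < N := by
      rcases le_or_gt 0 N with h | h
      · have : (0:ℝ) ≤ max (-N) 0 := le_max_right _ _
        simp only [hK]; linarith
      · have : -N ≤ max (-N) 0 := le_max_left _ _
        simp only [hK]; linarith
    rw [EReal.tendsto_nhds_bot_iff_real] at hratio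
    have hev := hratio (-(2 * K + 1))
    have hev' : ∀ᶠ x in leftFilter b, Df x / Dg x < -(2 * K + 1) := by
      filter_upwards [hev] with x hx
      exact_mod_cast hx
    obtain ⟨c, hc, hcb⟩ := eventually_extract hab hev'
    have hM : ∀ x : ℝ, c < x → (x : EReal) < b → Df x < (-(2 * K)) * Dg x := by
      intro x h1 h2
      have hxm : MemI a b x := ⟨hc.1.trans (EReal.coe_lt_coe_iff.2 h1), h2⟩
      have hDgx := hpos x hxm
      have hq := hcb x h1 h2
      have : Df x = (Df x / Dg x) * Dg x := (div_mul_cancel₀ _ (ne_of_gt hDgx)).symm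
      rw [this]
      have : (Df x / Dg x) * Dg x < (-(2 * K + 1)) * Dg x :=
        mul_lt_mul_of_pos_right hq hDgx
      nlinarith
    obtain ⟨u₀, hu₀, hub⟩ := key_up c hc (-(2 * K)) hM
    have hbig := bound_up (P := fun x => MemI a b x ∧ u₀ < x) hginf u₀ (-(2 * K)) 1
      one_pos ((eventually_gt_leftFilter hu₀).mono fun x hx => ⟨hx.2, hx.1⟩)
      (fun x hx => hub x hx.1 hx.2)
    filter_upwards [hbig] with x hx
    have : F x / G x < N := by linarith
    exact_mod_cast EReal.coe_lt_coe_iff.2 this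
  | coe r =>
    rw [EReal.tendsto_coe] at hratio ⊢
    rw [Metric.tendsto_nhds]
    intro ε hε
    set ε' : ℝ := ε / 4 with hε'def
    have hε' : 0 < ε' := by positivity
    have hev : ∀ᶠ x in leftFilter b, |Df x / Dg x - r| < ε' := by
      have := Metric.tendsto_nhds.1 hratio ε' hε'
      filter_upwards [this] with x hx
      rwa [Real.dist_eq] at hx
    obtain ⟨c, hc, hcb⟩ := eventually_extract hab hev
    have hMup : ∀ x : ℝ, c < x → (x : EReal) < b → Df x < (r + 2 * ε') * Dg x := by
      intro x h1 h2
      have hxm : MemI a b x := ⟨hc.1.trans (EReal.coe_lt_coe_iff.2 h1), h2⟩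
      have hDgx := hpos x hxm
      have hq := hcb x h1 h2
      rw [abs_lt] at hq
      have : Df x = (Df x / Dg x) * Dg x := (div_mul_cancel₀ _ (ne_of_gt hDgx)).symm
      rw [this]
      have h3 : Df x / Dg x < r + 2 * ε' := by linarith [hq.2]
      exact mul_lt_mul_of_pos_right h3 hDgx
    have hMlow : ∀ x : ℝ, c < x → (x : EReal) < b → (r - 2 * ε') * Dg x < Df x := by
      intro x h1 h2
      have hxm : MemI a b x := ⟨hc.1.trans (EReal.coe_lt_coe_iff.2 h1), h2⟩
      have hDgx := hpos x hxm
      have hq := hcb x h1 h2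
      rw [abs_lt] at hq
      have : Df x = (Df x / Dg x) * Dg x := (div_mul_cancel₀ _ (ne_of_gt hDgx)).symm
      rw [this]
      have h3 : r - 2 * ε' < Df x / Dg x := by linarith [hq.1]
      exact mul_lt_mul_of_pos_right h3 hDgx
    obtain ⟨u₁, hu₁, hub⟩ := key_up c hc (r + 2 * ε') hMup
    obtain ⟨u₂, hu₂, hlb⟩ := key_low c hc (r - 2 * ε') hMlow
    have hbig1 := bound_up (P := fun x => MemI a b x ∧ u₁ < x) hginf u₁ (r + 2 * ε') ε'
      hε' ((eventually_gt_leftFilter hu₁).mono fun x hx => ⟨hx.2, hx.1⟩)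
      (fun x hx => hub x hx.1 hx.2)
    have hbig2 := bound_low (P := fun x => MemI a b x ∧ u₂ < x) hginf u₂ (r - 2 * ε') ε'
      hε' ((eventually_gt_leftFilter hu₂).mono fun x hx => ⟨hx.2, hx.1⟩)
      (fun x hx => hlb x hx.1 hx.2)
    filter_upwards [hbig1, hbig2] with x hx1 hx2
    rw [Real.dist_eq, abs_lt]
    constructor <;> simp only [hε'def] at * <;> linarith
  | top =>
    rw [EReal.tendsto_nhds_top_iff_real]
    intro N
    set K : ℝ := max N 0 + 1 with hK
    have hK1 : 1 ≤ K := by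
      have := le_max_right N (0:ℝ); simp only [hK]; linarith
    have hKN : N < 2 * K - 1 := by
      have : N ≤ max N 0 := le_max_left _ _
      simp only [hK]; linarith
    rw [EReal.tendsto_nhds_top_iff_real] at hratio
    have hev := hratio (2 * K + 1)
    have hev' : ∀ᶠ x in leftFilter b, 2 * K + 1 < Df x / Dg x := by
      filter_upwards [hev] with x hx
      exact_mod_cast hx
    obtain ⟨c, hc, hcb⟩ := eventually_extract hab hev'
    have hM : ∀ x : ℝ, c < x → (x : EReal) < b → (2 * K) * Dg x < Df x := by
      intro x h1 h2
      have hxm : MemI a b x := ⟨hc.1.trans (EReal.coe_lt_coe_iff.2 h1), h2⟩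
      have hDgx := hpos x hxm
      have hq := hcb x h1 h2
      have : Df x = (Df x / Dg x) * Dg x := (div_mul_cancel₀ _ (ne_of_gt hDgx)).symm
      rw [this]
      have : (2 * K + 1) * Dg x < (Df x / Dg x) * Dg x :=
        mul_lt_mul_of_pos_right hq hDgx
      nlinarith
    obtain ⟨u₀, hu₀, hlb⟩ := key_low c hc (2 * K) hM
    have hbig := bound_low (P := fun x => MemI a b x ∧ u₀ < x) hginf u₀ (2 * K) 1
      one_pos ((eventually_gt_leftFilter hu₀).mono fun x hx => ⟨hx.2, hx.1⟩)
      (fun x hx => hlb x hx.1 hx.2)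
    filter_upwards [hbig] with x hx
    have : N < F x / G x := by linarith
    exact_mod_cast EReal.coe_lt_coe_iff.2 this
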